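/- Let n ≥ 1, 0 < ρ < 1, distinct ε_1,…,ε_n > 0, and 0 < w < 1. Define the n×n matrix U by U_{ij} = (−w²(1+ε_i) + ρ²/(1+ε_j)) / ((1+ε_i) − ρ²/(1+ε_j)). Then det U = (−1+w²)^{n−1} · U₁ · U₂ / Π_{i,j}((1+ε_i) − ρ²/(1+ε_j)), where U₁ = (−1)^{n+1} Π_j (ρ²/(1+ε_j)) + (−1)^n w² Π_i (1+ε_i) and U₂ = Π_{i<j} ρ²(ε_i−ε_j)² / ((1+ε_i)(1+ε_j)). -/

import Mathlib

open Finset Matrix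

private lemma cauchy_det : ∀ (n : ℕ) (a b : Fin n → ℝ), (∀ i j, a i - b j ≠ 0) →
    (Matrix.of fun i j => (a i - b j)⁻¹).det
      = (∏ i, ∏ j ∈ Ioi i, ((a j - a i) * (b i - b j))) / ∏ i, ∏ j, (a i - b j) := by
  intro n
  induction n with
  | zero =>
    intro a b _
    simp [Matrix.det_isEmpty]
  | succ n ih =>
    intro a b ha
    have key : ∀ x y : ℝ, x ≠ 0 → y ≠ 0 → x⁻¹ - y⁻¹ = (y - x) * (y⁻¹ * x⁻¹) := by
      intro x y hx hy; field_simp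
    set F : Matrix (Fin (n+1)) (Fin (n+1)) ℝ :=
      Matrix.of (Fin.cons (fun _ => (1:ℝ)) (fun i j => (a i.succ - b j)⁻¹)) with hF
    set G : Matrix (Fin (n+1)) (Fin (n+1)) ℝ :=
      Matrix.of (fun i => Fin.cons (F i 0) (fun j => F i j.succ - F i 0)) with hG
    have step1 : (Matrix.of fun i j : Fin (n+1) => (a i - b j)⁻¹).det
        = (Matrix.of (Fin.cons (fun j => (a 0 - b j)⁻¹)
            (fun i j => (a i.succ - b j)⁻¹ - (a 0 - b j)⁻¹))).det := by
      apply Matrix.det_eq_of_forall_row_eq_smul_add_const (Matrix.vecCons 0 1) 0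
        (Matrix.cons_val_zero _ _)
      intro i j
      refine Fin.cases ?_ (fun i => ?_) i <;> simp [Matrix.vecCons] <;> ring
    have step2 : (Matrix.of (Fin.cons (fun j => (a 0 - b j)⁻¹)
            (fun i j => (a i.succ - b j)⁻¹ - (a 0 - b j)⁻¹)))
        = Matrix.of (fun i j => (Fin.cons 1 (fun i => a 0 - a i.succ) : Fin (n+1) → ℝ) i *
            (Matrix.of (fun i j => (a 0 - b j)⁻¹ * F i j) i j)) := by
      ext i j
      refine Fin.cases ?_ (fun i => ?_) i
      · simp [hF]
      · simp only [Matrix.of_apply, Fin.cons_succ, hF]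
        rw [key _ _ (ha i.succ j) (ha 0 j)]
        ring
    have step2' : (Matrix.of (Fin.cons (fun j => (a 0 - b j)⁻¹)
            (fun i j => (a i.succ - b j)⁻¹ - (a 0 - b j)⁻¹))).det
        = (∏ i : Fin (n+1), (Fin.cons 1 (fun i => a 0 - a i.succ) : Fin (n+1) → ℝ) i) *
          ((∏ j : Fin (n+1), (a 0 - b j)⁻¹) * F.det) := by
      rw [step2, Matrix.det_mul_column]
      congr 1
      exact Matrix.det_mul_row _ _
    have step3 : F.det = G.det := by
      rw [← Matrix.det_transpose F, ← Matrix.det_transpose G]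
      apply Matrix.det_eq_of_forall_row_eq_smul_add_const (Matrix.vecCons 0 1) 0
        (Matrix.cons_val_zero _ _)
      intro j i
      simp only [Matrix.transpose_apply, hG, Matrix.of_apply]
      refine Fin.cases ?_ (fun j => ?_) j <;> simp [Matrix.vecCons] <;> ring
    have hG00 : G 0 0 = 1 := by simp [hG, hF]
    have hG0s : ∀ j : Fin n, G 0 j.succ = 0 := by intro j; simp [hG, hF]
    have step4 : G.det = (G.submatrix Fin.succ Fin.succ).det := by
      rw [Matrix.det_succ_row_zero, Fin.sum_univ_succ]
      simp [hG00, hG0s, Fin.succAbove_zero]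
    have step5 : G.submatrix Fin.succ Fin.succ
        = Matrix.of (fun i j : Fin n => (b j.succ - b 0) *
            (Matrix.of (fun i j : Fin n => (a i.succ - b 0)⁻¹ *
              (Matrix.of (fun i j : Fin n => (a i.succ - b j.succ)⁻¹) i j)) i j)) := by
      ext i j
      simp only [Matrix.submatrix_apply, hG, Matrix.of_apply, Fin.cons_succ, hF]
      rw [key _ _ (ha i.succ j.succ) (ha i.succ 0)]
      ring
    have step5' : (G.submatrix Fin.succ Fin.succ).det
        = (∏ j : Fin n, (b j.succ - b 0)) * ((∏ i : Fin n, (a i.succ - b 0)⁻¹) *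
            (Matrix.of (fun i j : Fin n => (a i.succ - b j.succ)⁻¹)).det) := by
      rw [step5, Matrix.det_mul_row]
      congr 1
      exact Matrix.det_mul_column _ _
    have hih := ih (fun i => a i.succ) (fun j => b j.succ) (fun i j => ha i.succ j.succ)
    rw [step1, step2', step3, step4, step5', hih]
    -- now pure algebra
    rw [Fin.prod_univ_succ (f := (Fin.cons 1 (fun i => a 0 - a i.succ) : Fin (n+1) → ℝ))]
    simp only [Fin.cons_zero, Fin.cons_succ, one_mul]
    -- RHS decomposition
    rw [Fin.prod_univ_succ (f := fun i : Fin (n+1) => ∏ j ∈ Ioi i, ((a j - a i) * (b i - b j))),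
        Fin.prod_univ_succ (f := fun i : Fin (n+1) => ∏ j : Fin (n+1), (a i - b j))]
    rw [Fin.prod_Ioi_zero]
    simp only [Fin.prod_Ioi_succ]
    have hsplit : ∀ i : Fin n, ∏ j : Fin (n+1), (a i.succ - b j)
        = (a i.succ - b 0) * ∏ j : Fin n, (a i.succ - b j.succ) := fun i =>
      Fin.prod_univ_succ _
    simp only [hsplit]
    have e1 : (∏ j : Fin n, ((a j.succ - a 0) * (b 0 - b j.succ)))
        = (∏ i : Fin n, (a 0 - a i.succ)) * ∏ j : Fin n, (b j.succ - b 0) := by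
      rw [← Finset.prod_mul_distrib]
      exact Finset.prod_congr rfl (fun i _ => by ring)
    have e2 : (∏ i : Fin n, ((a i.succ - b 0) * ∏ j : Fin n, (a i.succ - b j.succ)))
        = (∏ i : Fin n, (a i.succ - b 0)) * ∏ i : Fin n, ∏ j : Fin n, (a i.succ - b j.succ) :=
      Finset.prod_mul_distrib
    rw [e1, e2]
    have hQ1 : (∏ j : Fin (n+1), (a 0 - b j)) ≠ 0 :=
      Finset.prod_ne_zero_iff.mpr (fun j _ => ha 0 j)
    have hQ2 : (∏ i : Fin n, (a i.succ - b 0)) ≠ 0 :=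
      Finset.prod_ne_zero_iff.mpr (fun i _ => ha i.succ 0)
    have hD : (∏ i : Fin n, ∏ j : Fin n, (a i.succ - b j.succ)) ≠ 0 :=
      Finset.prod_ne_zero_iff.mpr (fun i _ =>
        Finset.prod_ne_zero_iff.mpr (fun j _ => ha i.succ j.succ))
    rw [Finset.prod_inv_distrib, Finset.prod_inv_distrib]
    field_simp

open Matrix

private lemma det_add_smul_ones {n : ℕ} (M : Matrix (Fin n) (Fin n) ℝ)
    (hM : IsUnit M.det) (u v : Fin n → ℝ) (t : ℝ) :
    (Matrix.of (fun i j => M i j + t * (u i * v j))).det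
      = (1 - t) * M.det + t * (Matrix.of (fun i j => M i j + u i * v j)).det := by
  have hcol : ∀ (s : ℝ) (w : Fin n → ℝ),
      Matrix.replicateCol Unit (s • w) = s • Matrix.replicateCol Unit w := by
    intro s w; ext i j; simp
  have h1 : ∀ s : ℝ, Matrix.of (fun i j => M i j + s * (u i * v j))
      = M + Matrix.replicateCol Unit (s • u) * Matrix.replicateRow Unit v := by
    intro s; ext i j
    simp [Matrix.mul_apply, mul_assoc]
  have h2 : ∀ s : ℝ, (M + Matrix.replicateCol Unit (s • u) * Matrix.replicateRow Unit v).det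
      = M.det * (1 + s * (Matrix.replicateRow Unit v * M⁻¹ * Matrix.replicateCol Unit u) () ()) := by
    intro s
    rw [Matrix.det_add_replicateCol_mul_replicateRow hM, hcol, Matrix.mul_smul,
      Matrix.det_unique (1 + s • (Matrix.replicateRow Unit v * M⁻¹ * Matrix.replicateCol Unit u))]
    simp [Matrix.one_apply_eq]
  have h1' : Matrix.of (fun i j => M i j + u i * v j)
      = M + Matrix.replicateCol Unit ((1:ℝ) • u) * Matrix.replicateRow Unit v := by
    rw [← h1]; norm_num
  rw [h1 t, h2 t, h1', h2 1]
  ring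


/-- Cauchy-type determinant identity: for distinct `ε_1,…,ε_n > 0`, `0 < ρ < 1`,
`0 < w < 1`, the matrix `U_{ij} = (−w²(1+ε_i) + ρ²/(1+ε_j))/((1+ε_i) − ρ²/(1+ε_j))`
satisfies `det U = (−1+w²)^{n−1} · U₁ · U₂ / ∏_{i,j}((1+ε_i) − ρ²/(1+ε_j))`, where
`U₁ = (−1)^{n+1} ∏_j (ρ²/(1+ε_j)) + (−1)^n w² ∏_i (1+ε_i)` and
`U₂ = ∏_{i<j} ρ²(ε_i−ε_j)²/((1+ε_i)(1+ε_j))`. -/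
theorem stmt_10 (n : ℕ) (hn : 1 ≤ n) (ρ w : ℝ) (hρ0 : 0 < ρ) (hρ1 : ρ < 1)
    (hw0 : 0 < w) (hw1 : w < 1) (ε : Fin n → ℝ) (hε : ∀ i, 0 < ε i)
    (hdist : Function.Injective ε) :
    (Matrix.of (fun i j : Fin n =>
        (-w ^ 2 * (1 + ε i) + ρ ^ 2 / (1 + ε j)) / ((1 + ε i) - ρ ^ 2 / (1 + ε j)))).det =
      (-1 + w ^ 2) ^ (n - 1) *
        ((-1 : ℝ) ^ (n + 1) * ∏ j, ρ ^ 2 / (1 + ε j) +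
          (-1 : ℝ) ^ n * w ^ 2 * ∏ i, (1 + ε i)) *
        (∏ i, ∏ j ∈ Finset.Ioi i, ρ ^ 2 * (ε i - ε j) ^ 2 / ((1 + ε i) * (1 + ε j))) /
        ∏ i, ∏ j, ((1 + ε i) - ρ ^ 2 / (1 + ε j)) := by
  obtain ⟨m, rfl⟩ : ∃ m, n = m + 1 := ⟨n - 1, (Nat.succ_pred_eq_of_pos hn).symm⟩
  have hεpos : ∀ i, (0:ℝ) < 1 + ε i := fun i => by linarith [hε i]
  have hane : ∀ i, (1:ℝ) + ε i ≠ 0 := fun i => ne_of_gt (hεpos i)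
  set a : Fin (m+1) → ℝ := fun i => 1 + ε i with ha_def
  set b : Fin (m+1) → ℝ := fun j => ρ^2/(1+ε j) with hb_def
  have hblt : ∀ j, b j < 1 := by
    intro j
    rw [hb_def, div_lt_one (hεpos j)]
    nlinarith [hε j]
  have hbpos : ∀ j, 0 < b j := fun j => div_pos (by positivity) (hεpos j)
  have hagt : ∀ i, (1:ℝ) < a i := fun i => by simp [ha_def]; linarith [hε i]
  have hab : ∀ i j, a i - b j ≠ 0 := fun i j =>
    ne_of_gt (by linarith [hblt j, hagt i])
  have haInj : Function.Injective a := fun i j h => hdist (by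
    have : (1:ℝ) + ε i = 1 + ε j := h
    linarith)
  have hbInj : Function.Injective b := by
    intro i j h
    rw [hb_def] at h
    rw [div_eq_div_iff (hane i) (hane j)] at h
    have hρ2 : (ρ:ℝ)^2 ≠ 0 := by positivity
    have h3 := mul_left_cancel₀ hρ2 h
    exact hdist (by linarith)
  have hC := cauchy_det (m+1) a b hab
  set Nn := ∏ i, ∏ j ∈ Ioi i, ((a j - a i) * (b i - b j)) with hNn_def
  set Dn := ∏ i, ∏ j, (a i - b j) with hDn_def
  have hDn0 : Dn ≠ 0 := Finset.prod_ne_zero_iff.mpr fun i _ =>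
    Finset.prod_ne_zero_iff.mpr fun j _ => hab i j
  have hNn0 : Nn ≠ 0 := by
    refine Finset.prod_ne_zero_iff.mpr fun i _ => Finset.prod_ne_zero_iff.mpr fun j hj => ?_
    have hij : i ≠ j := ne_of_lt (Finset.mem_Ioi.mp hj)
    exact mul_ne_zero (sub_ne_zero.mpr fun h => hij (haInj h).symm)
      (sub_ne_zero.mpr fun h => hij (hbInj h))
  set C0 := Matrix.of fun i j : Fin (m+1) => (a i - b j)⁻¹ with hC0_def
  set D0 := Matrix.of fun i j : Fin (m+1) => b j * C0 i j with hD0_def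
  have hB0 : (∏ j, b j) ≠ 0 := Finset.prod_ne_zero_iff.mpr fun j _ => ne_of_gt (hbpos j)
  have hA0 : (∏ i, a i) ≠ 0 := Finset.prod_ne_zero_iff.mpr fun i _ =>
    ne_of_gt (lt_trans one_pos (hagt i))
  have hD0det : D0.det = (∏ j, b j) * C0.det := Matrix.det_mul_row b C0
  have hdetC0 : C0.det ≠ 0 := by
    rw [hC0_def, hC]
    exact div_ne_zero hNn0 hDn0
  have hIsUnit : IsUnit D0.det := isUnit_iff_ne_zero.mpr (by
    rw [hD0det]; exact mul_ne_zero hB0 hdetC0)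
  have hw2 : (1:ℝ) - w^2 ≠ 0 := by nlinarith
  have hUeq : (Matrix.of (fun i j : Fin (m+1) =>
        (-w ^ 2 * (1 + ε i) + ρ ^ 2 / (1 + ε j)) / ((1 + ε i) - ρ ^ 2 / (1 + ε j))))
      = (1 - w^2) • (Matrix.of fun i j : Fin (m+1) =>
          D0 i j + (-w^2/(1-w^2)) * ((fun _ => (1:ℝ)) i * (fun _ => (1:ℝ)) j)) := by
    ext i j
    simp only [Matrix.of_apply, Matrix.smul_apply, smul_eq_mul, hD0_def, hC0_def, ha_def, hb_def]
    have hd : (1 + ε i - ρ^2/(1+ε j)) ≠ 0 := hab i j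
    have hE : (1 + ε i + ε i * ε j + (ε j - ρ ^ 2)) ≠ 0 := by
      nlinarith [hε i, hε j, sq_nonneg ρ]
    field_simp [hane j, hw2, hd, hE]
    linear_combination (-(w^2)) * mul_inv_cancel₀ hE
  rw [hUeq, Matrix.det_smul, det_add_smul_ones D0 hIsUnit _ _ _]
  have honesM : (Matrix.of fun i j : Fin (m+1) =>
        D0 i j + (fun _ => (1:ℝ)) i * (fun _ => (1:ℝ)) j)
      = Matrix.of fun i j : Fin (m+1) => a i * C0 i j := by
    ext i j
    simp only [Matrix.of_apply, hD0_def, hC0_def]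
    field_simp [hab i j]
    ring
  rw [honesM, Matrix.det_mul_column a C0, hD0det, hC]
  have hN' : (∏ i, ∏ j ∈ Finset.Ioi i, ρ ^ 2 * (ε i - ε j) ^ 2 / ((1 + ε i) * (1 + ε j))) = Nn := by
    rw [hNn_def]
    refine Finset.prod_congr rfl fun i _ => Finset.prod_congr rfl fun j _ => ?_
    rw [ha_def, hb_def]
    field_simp [hane i, hane j]
    ring
  rw [hN']
  simp only [Fintype.card_fin, Nat.add_sub_cancel, smul_eq_mul]
  have h2 : ((-1:ℝ))^m * (-1)^m = 1 := by
    rw [← pow_add]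
    exact Even.neg_one_pow ⟨m, rfl⟩
  have hpow : ((-1:ℝ) + w^2)^m = (-1)^m * (1-w^2)^m := by
    rw [show ((-1:ℝ)+w^2) = (-1)*(1-w^2) by ring, mul_pow]
  rw [hpow]
  have e4 : ((-1:ℝ))^m * (1-w^2)^m * ((-1)^(m+1+1) * Finset.univ.prod b
        + (-1)^(m+1)*w^2*Finset.univ.prod a)
      = (1-w^2)^m * (Finset.univ.prod b - w^2 * Finset.univ.prod a) := by
    simp only [pow_succ]
    linear_combination ((1-w^2)^m * (Finset.univ.prod b - w^2 * Finset.univ.prod a)) * h2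
  rw [e4]
  have e3 : (1:ℝ) - -w^2/(1-w^2) = 1/(1-w^2) := by field_simp; ring
  rw [e3, pow_succ]
  field_simp [hw2, hDn0]
  ring
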